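/- Let F : ℝ^d → (convex compact subsets of ℝ^d) be L-Lipschitz w.r.t. the sup-norm Hausdorff distance, h > 0 with Lh < 1, Φ(x) := x + hF(x), ρ > 0, α* := (1+Lh)ρ/2, and Φ_{α*}(x) := B_{α*}(Φ(x))_∞. If M ⊂ Δ_ρ = ρℤ^d is chain-connected, then Φ_{α*}(M) ∩ Δ_ρ := (⋃_{m∈M} Φ_{α*}(m)) ∩ Δ_ρ is chain-connected. -/

import Mathlib

open Metric Set Pointwise

/-- The grid `ρ ℤ^d` of spacing `ρ` in `ℝ^d`. -/
def grid (ρ : ℝ) (d : ℕ) : Set (Fin d → ℝ) :=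
  {x | ∀ i, ∃ k : ℤ, x i = ρ * k}

/-- `x` and `y` are connected by a chain of spacing `ρ` inside `S`. -/
def ChainConn (ρ : ℝ) {d : ℕ} (S : Set (Fin d → ℝ)) (x y : Fin d → ℝ) : Prop :=
  ∃ (N : ℕ) (c : ℕ → Fin d → ℝ), c 0 = x ∧ c N = y ∧
    (∀ n < N, dist (c (n + 1)) (c n) = ρ) ∧ (∀ n ≤ N, c n ∈ S)

/-- A set of grid points is chain-connected if any two of its points are
joined by a chain within the set. -/
def ChainConnected (ρ : ℝ) {d : ℕ} (S : Set (Fin d → ℝ)) : Prop :=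
  ∀ x ∈ S, ∀ y ∈ S, ChainConn ρ S x y

namespace ChainConn

variable {ρ : ℝ} {d : ℕ} {S T : Set (Fin d → ℝ)} {x y z : Fin d → ℝ}

lemma refl (hx : x ∈ S) : ChainConn ρ S x x :=
  ⟨0, fun _ => x, rfl, rfl, fun n hn => absurd hn (by omega), fun _ _ => hx⟩

lemma trans (h1 : ChainConn ρ S x y) (h2 : ChainConn ρ S y z) : ChainConn ρ S x z := by
  obtain ⟨N1, c1, h10, h1N, h1s, h1m⟩ := h1
  obtain ⟨N2, c2, h20, h2N, h2s, h2m⟩ := h2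
  refine ⟨N1 + N2, fun n => if n ≤ N1 then c1 n else c2 (n - N1), by simp [h10], ?_, ?_, ?_⟩
  · by_cases hN : N1 + N2 ≤ N1
    · have hN2 : N2 = 0 := by omega
      simp only [if_pos hN]
      rw [show N1 + N2 = N1 by omega, h1N, ← h2N, hN2, h20]
    · simp only [if_neg hN]
      rw [show N1 + N2 - N1 = N2 by omega, h2N]
  · intro n hn
    dsimp only
    by_cases h' : n + 1 ≤ N1
    · rw [if_pos h', if_pos (by omega)]
      exact h1s n (by omega)
    · rw [if_neg h']
      have hn1 : n + 1 - N1 = (n - N1) + 1 := by omega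
      by_cases h'' : n ≤ N1
      · have hn0 : n = N1 := by omega
        rw [if_pos h'', show n + 1 - N1 = 0 + 1 by omega, hn0, h1N, ← h20]
        exact h2s 0 (by omega)
      · rw [if_neg h'', hn1]
        exact h2s (n - N1) (by omega)
  · intro n hn
    dsimp only
    by_cases h' : n ≤ N1
    · rw [if_pos h']; exact h1m n h'
    · rw [if_neg h']; exact h2m (n - N1) (by omega)

lemma symm (h1 : ChainConn ρ S x y) : ChainConn ρ S y x := by
  obtain ⟨N, c, h0, hN, hs, hm⟩ := h1
  refine ⟨N, fun n => c (N - n), by simp [hN], by simp [h0], ?_, fun n hn => hm _ (by omega)⟩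
  intro n hn
  dsimp only
  rw [dist_comm, show N - n = N - (n + 1) + 1 by omega]
  exact hs (N - (n+1)) (by omega)

lemma mono (hST : S ⊆ T) (h1 : ChainConn ρ S x y) : ChainConn ρ T x y := by
  obtain ⟨N, c, h0, hN, hs, hm⟩ := h1
  exact ⟨N, c, h0, hN, hs, fun n hn => hST (hm n hn)⟩

lemma single (hx : x ∈ S) (hy : y ∈ S) (hxy : x = y ∨ dist x y = ρ) : ChainConn ρ S x y := by
  rcases hxy with rfl | hxy
  · exact refl hx
  · refine ⟨1, fun n => if n = 0 then x else y, by simp, by simp, ?_, ?_⟩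
    · intro n hn
      have : n = 0 := by omega
      subst this
      simpa [dist_comm] using hxy
    · intro n hn
      rcases Nat.lt_or_ge n 1 with h' | h'
      · simp [show n = 0 by omega, hx]
      · simp [show n = 1 by omega, hy]

end ChainConn

noncomputable def rnd (ρ : ℝ) {d : ℕ} (x : Fin d → ℝ) : Fin d → ℝ :=
  fun i => ρ * round (x i / ρ)

lemma rnd_grid (ρ : ℝ) {d : ℕ} (x : Fin d → ℝ) : rnd ρ x ∈ grid ρ d :=
  fun i => ⟨round (x i / ρ), rfl⟩

lemma rnd_coord {ρ : ℝ} (hρ : 0 < ρ) {d : ℕ} (x : Fin d → ℝ) (i : Fin d) :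
    |rnd ρ x i - x i| ≤ ρ / 2 := by
  have h1 : rnd ρ x i - x i = ρ * (↑(round (x i / ρ)) - x i / ρ) := by
    rw [rnd, mul_sub, mul_div_cancel₀ _ (ne_of_gt hρ)]
  rw [h1, abs_mul, abs_of_pos hρ, abs_sub_comm]
  have := abs_sub_round (x i / ρ)
  nlinarith

lemma rnd_dist {ρ : ℝ} (hρ : 0 < ρ) {d : ℕ} (x : Fin d → ℝ) :
    dist (rnd ρ x) x ≤ ρ / 2 := by
  rw [dist_pi_le_iff (by linarith)]
  intro i
  rw [Real.dist_eq]
  exact rnd_coord hρ x i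

lemma rnd_add_gridvec {ρ : ℝ} (hρ : 0 < ρ) {d : ℕ} (x v : Fin d → ℝ)
    (hv : ∀ i, ∃ k : ℤ, v i = ρ * k) : rnd ρ (x + v) = rnd ρ x + v := by
  funext i
  obtain ⟨k, hk⟩ := hv i
  have h2 : (x + v) i / ρ = x i / ρ + (k : ℝ) := by
    rw [Pi.add_apply, hk, add_div, mul_div_cancel_left₀ _ (ne_of_gt hρ)]
  show ρ * ↑(round ((x + v) i / ρ)) = rnd ρ x i + v i
  rw [h2, round_add_intCast, rnd, hk]
  push_cast
  ring

section Walk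

variable {ρ : ℝ} {d : ℕ}

lemma walk_aux (hρ : 0 < ρ) {r : ℝ} (c g' : Fin d → ℝ)
    (hg' : g' ∈ grid ρ d) (hb' : ∀ i, |g' i - c i| ≤ r) :
    ∀ N : ℕ, ∀ g : Fin d → ℝ, ∀ k : Fin d → ℤ, g ∈ grid ρ d →
      (∀ i, |g i - c i| ≤ r) → (∀ i, g i = g' i + ρ * k i) →
      (∑ i, (k i).natAbs) = N →
      ChainConn ρ {p | (∀ i, |p i - c i| ≤ r) ∧ p ∈ grid ρ d} g g' := by
  intro N
  induction N with
  | zero =>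
    intro g k hg hb hk hsum
    have hk0 : ∀ i, k i = 0 := by
      intro i
      have := Finset.sum_eq_zero_iff.mp hsum i (Finset.mem_univ i)
      omega
    have : g = g' := by
      funext i
      rw [hk i, hk0 i]
      push_cast
      ring
    rw [this]
    exact ChainConn.refl ⟨hb', hg'⟩
  | succ N ih =>
    intro g k hg hb hk hsum
    have hex : ∃ i, k i ≠ 0 := by
      by_contra hcon
      push_neg at hcon
      have : (∑ i, (k i).natAbs) = 0 := Finset.sum_eq_zero (fun i _ => by rw [hcon i]; rfl)
      omega
    obtain ⟨i, hi⟩ := hex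
    set ε : ℤ := if 0 < k i then 1 else -1 with hε
    set g₂ : Fin d → ℝ := Function.update g i (g i - ρ * ε) with hg₂
    set k₂ : Fin d → ℤ := Function.update k i (k i - ε) with hk₂
    have hcases : (1 ≤ k i ∧ ε = 1) ∨ (k i ≤ -1 ∧ ε = -1) := by
      rcases lt_or_ge 0 (k i) with h' | h'
      · left; exact ⟨h', if_pos h'⟩
      · right; exact ⟨by omega, if_neg (by omega)⟩
    have hg₂grid : g₂ ∈ grid ρ d := by
      intro j
      by_cases hji : j = i
      · subst hji
        obtain ⟨a, ha⟩ := hg j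
        exact ⟨a - ε, by rw [hg₂, Function.update_self, ha]; push_cast; ring⟩
      · rw [hg₂, Function.update_of_ne hji]
        exact hg j
    have hg₂b : ∀ j, |g₂ j - c j| ≤ r := by
      intro j
      by_cases hji : j = i
      · subst hji
        rw [hg₂, Function.update_self]
        have h1 := hb j
        have h2 := hb' j
        have h3 := hk j
        rw [abs_le] at h1 h2 ⊢
        rcases hcases with ⟨hki, hεv⟩ | ⟨hki, hεv⟩
        · have : (1 : ℝ) ≤ (k j : ℝ) := by exact_mod_cast hki
          rw [hεv]; push_cast
          constructor <;> nlinarith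
        · have : (k j : ℝ) ≤ -1 := by exact_mod_cast hki
          rw [hεv]; push_cast
          constructor <;> nlinarith
      · rw [hg₂, Function.update_of_ne hji]
        exact hb j
    have hg₂k : ∀ j, g₂ j = g' j + ρ * k₂ j := by
      intro j
      by_cases hji : j = i
      · subst hji
        rw [hg₂, hk₂, Function.update_self, Function.update_self, hk j]
        push_cast; ring
      · rw [hg₂, hk₂, Function.update_of_ne hji, Function.update_of_ne hji]
        exact hk j
    have hsum₂ : (∑ j, (k₂ j).natAbs) = N := by
      rw [hk₂]
      have := Finset.sum_update_of_mem (Finset.mem_univ i) (fun j => (k j).natAbs) ((k i - ε).natAbs)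
      have h2 : (∑ j, (Function.update (fun j => (k j).natAbs) i ((k i - ε).natAbs)) j)
          = (k i - ε).natAbs + ∑ j ∈ Finset.univ \ {i}, (k j).natAbs := this
      have h3 : (∑ j, ((Function.update k i (k i - ε)) j).natAbs)
          = (k i - ε).natAbs + ∑ j ∈ Finset.univ \ {i}, (k j).natAbs := by
        rw [← h2]
        apply Finset.sum_congr rfl
        intro j _
        by_cases hji : j = i
        · subst hji; rw [Function.update_self, Function.update_self]
        · rw [Function.update_of_ne hji, Function.update_of_ne hji]
      have h4 : (∑ j, (k j).natAbs) = (k i).natAbs + ∑ j ∈ Finset.univ \ {i}, (k j).natAbs := by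
        rw [← Finset.sum_update_of_mem (Finset.mem_univ i) (fun j => (k j).natAbs) ((k i).natAbs)]
        apply Finset.sum_congr rfl
        intro j _
        by_cases hji : j = i
        · subst hji; rw [Function.update_self]
        · rw [Function.update_of_ne hji]
      have h5 : (k i - ε).natAbs = (k i).natAbs - 1 := by
        rcases hcases with ⟨hki, hεv⟩ | ⟨hki, hεv⟩ <;> omega
      rw [h3, h5]
      omega
    have hdist : dist g₂ g = ρ := by
      apply le_antisymm
      · rw [dist_pi_le_iff (le_of_lt hρ)]
        intro j
        by_cases hji : j = i
        · subst hji
          rw [hg₂, Function.update_self, Real.dist_eq]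
          have : g j - ρ * ε - g j = -(ρ * ε) := by ring
          rw [this, abs_neg, abs_mul, abs_of_pos hρ]
          rcases hcases with ⟨_, hεv⟩ | ⟨_, hεv⟩ <;> rw [hεv] <;> norm_num
        · rw [hg₂, Function.update_of_ne hji, dist_self]
          linarith
      · calc ρ = dist (g₂ i) (g i) := by
              rw [hg₂, Function.update_self, Real.dist_eq]
              have : g i - ρ * ε - g i = -(ρ * ε) := by ring
              rw [this, abs_neg, abs_mul, abs_of_pos hρ]
              rcases hcases with ⟨_, hεv⟩ | ⟨_, hεv⟩ <;> rw [hεv] <;> norm_num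
          _ ≤ dist g₂ g := dist_le_pi_dist g₂ g i
    exact ChainConn.trans
      (ChainConn.single ⟨hb, hg⟩ ⟨hg₂b, hg₂grid⟩ (Or.inr (by rw [dist_comm]; exact hdist)))
      (ih g₂ k₂ hg₂grid hg₂b hg₂k hsum₂)

lemma walk (hρ : 0 < ρ) {r : ℝ} (c g g' : Fin d → ℝ)
    (hg : g ∈ grid ρ d) (hg' : g' ∈ grid ρ d)
    (hb : ∀ i, |g i - c i| ≤ r) (hb' : ∀ i, |g' i - c i| ≤ r) :
    ChainConn ρ {p | (∀ i, |p i - c i| ≤ r) ∧ p ∈ grid ρ d} g g' := by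
  have hk : ∀ i, ∃ k : ℤ, g i = g' i + ρ * k := by
    intro i
    obtain ⟨a, ha⟩ := hg i
    obtain ⟨b, hb₂⟩ := hg' i
    exact ⟨a - b, by rw [ha, hb₂]; push_cast; ring⟩
  choose k hkk using hk
  exact walk_aux hρ c g' hg' hb' (∑ i, (k i).natAbs) g k hg hb hkk rfl

end Walk

section Segment

variable {ρ : ℝ} {d : ℕ}

lemma infDist_segment {C : Set (Fin d → ℝ)} (hC : Convex ℝ C) (hcp : IsCompact C)
    (hn : C.Nonempty) {a b : Fin d → ℝ} {t : ℝ} (ht0 : 0 ≤ t) (ht1 : t ≤ 1) :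
    infDist ((1 - t) • a + t • b) C ≤ max (infDist a C) (infDist b C) := by
  obtain ⟨p, hp, hpa⟩ := hcp.exists_infDist_eq_dist hn a
  obtain ⟨q, hq, hqb⟩ := hcp.exists_infDist_eq_dist hn b
  have hmem : (1 - t) • p + t • q ∈ C := hC hp hq (by linarith) ht0 (by ring)
  calc infDist ((1 - t) • a + t • b) C ≤ dist ((1 - t) • a + t • b) ((1 - t) • p + t • q) :=
        infDist_le_dist_of_mem hmem
    _ = ‖(1 - t) • (a - p) + t • (b - q)‖ := by
        rw [dist_eq_norm]
        congr 1
        module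
    _ ≤ ‖(1 - t) • (a - p)‖ + ‖t • (b - q)‖ := norm_add_le _ _
    _ = (1 - t) * dist a p + t * dist b q := by
        rw [norm_smul, norm_smul, Real.norm_eq_abs, Real.norm_eq_abs,
          abs_of_nonneg (by linarith : (0:ℝ) ≤ 1 - t), abs_of_nonneg ht0,
          dist_eq_norm, dist_eq_norm]
    _ ≤ max (infDist a C) (infDist b C) := by
        rw [← hpa, ← hqb]
        have h1 : infDist a C ≤ max (infDist a C) (infDist b C) := le_max_left _ _
        have h2 : infDist b C ≤ max (infDist a C) (infDist b C) := le_max_right _ _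
        nlinarith

lemma round_pair (hρ : 0 < ρ) {a b : Fin d → ℝ} (hab : dist a b ≤ ρ / 2) :
    rnd ρ a = rnd ρ b ∨ dist (rnd ρ a) (rnd ρ b) = ρ := by
  have hcoord : ∀ i, rnd ρ a i = rnd ρ b i ∨ |rnd ρ a i - rnd ρ b i| = ρ := by
    intro i
    have h1 := rnd_coord hρ a i
    have h2 := rnd_coord hρ b i
    have h3 : dist (a i) (b i) ≤ ρ / 2 := le_trans (dist_le_pi_dist a b i) hab
    rw [Real.dist_eq] at h3
    have hdiff : rnd ρ a i - rnd ρ b i = ρ * ((round (a i / ρ) : ℝ) - (round (b i / ρ) : ℝ)) := by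
      rw [rnd, rnd]; ring
    have habs : |rnd ρ a i - rnd ρ b i| ≤ 3 * ρ / 2 := by
      have : rnd ρ a i - rnd ρ b i = (rnd ρ a i - a i) + (a i - b i) + (b i - rnd ρ b i) := by ring
      rw [this]
      calc |(rnd ρ a i - a i) + (a i - b i) + (b i - rnd ρ b i)|
          ≤ |(rnd ρ a i - a i) + (a i - b i)| + |b i - rnd ρ b i| := abs_add_le _ _
        _ ≤ |rnd ρ a i - a i| + |a i - b i| + |b i - rnd ρ b i| := by
            have := abs_add_le (rnd ρ a i - a i) (a i - b i)
            linarith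
        _ ≤ 3 * ρ / 2 := by rw [abs_sub_comm (b i)]; linarith
    set n : ℤ := round (a i / ρ) - round (b i / ρ) with hn
    have hdiff' : rnd ρ a i - rnd ρ b i = ρ * (n : ℝ) := by rw [hdiff, hn]; push_cast; ring
    have hnabs : |(n : ℝ)| ≤ 3 / 2 := by
      rw [hdiff', abs_mul, abs_of_pos hρ] at habs
      nlinarith
    have hn1 : n = 0 ∨ n = 1 ∨ n = -1 := by
      have h1n : |n| ≤ 1 := by
        by_contra hcon
        have h2n : (2 : ℤ) ≤ |n| := by omega
        have : (2 : ℝ) ≤ |(n : ℝ)| := by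
          rw [← Int.cast_abs]; exact_mod_cast h2n
        linarith
      have := abs_le.mp h1n
      omega
    rcases hn1 with h | h | h
    · left
      have hz : rnd ρ a i - rnd ρ b i = 0 := by rw [hdiff', h]; norm_num
      linarith
    · right; rw [hdiff', h, abs_mul, abs_of_pos hρ]; norm_num
    · right; rw [hdiff', h, abs_mul, abs_of_pos hρ]; norm_num
  by_cases heq : rnd ρ a = rnd ρ b
  · exact Or.inl heq
  · right
    apply le_antisymm
    · rw [dist_pi_le_iff (le_of_lt hρ)]
      intro i
      rw [Real.dist_eq]
      rcases hcoord i with h | h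
      · rw [h, sub_self, abs_zero]; linarith
      · rw [h]
    · obtain ⟨i, hi⟩ := Function.ne_iff.mp heq
      rcases hcoord i with h | h
      · exact absurd h hi
      · calc ρ = dist (rnd ρ a i) (rnd ρ b i) := by rw [Real.dist_eq, h]
          _ ≤ dist (rnd ρ a) (rnd ρ b) := dist_le_pi_dist _ _ i

lemma rnd_mem {C : Set (Fin d → ℝ)} (hρ : 0 < ρ) {r : ℝ} {a : Fin d → ℝ}
    (ha : infDist a C ≤ r - ρ / 2) :
    rnd ρ a ∈ {g | infDist g C ≤ r ∧ g ∈ grid ρ d} := by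
  constructor
  · calc infDist (rnd ρ a) C ≤ infDist a C + dist (rnd ρ a) a := infDist_le_infDist_add_dist
      _ ≤ (r - ρ / 2) + ρ / 2 := add_le_add ha (rnd_dist hρ a)
      _ = r := by ring
  · exact rnd_grid ρ a

lemma segment_chain_aux {C : Set (Fin d → ℝ)} (hρ : 0 < ρ) (hC : Convex ℝ C)
    (hcp : IsCompact C) (hn : C.Nonempty) {r : ℝ} :
    ∀ n : ℕ, ∀ a b : Fin d → ℝ, infDist a C ≤ r - ρ / 2 → infDist b C ≤ r - ρ / 2 →
      dist a b ≤ n * (ρ / 2) →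
      ChainConn ρ {g | infDist g C ≤ r ∧ g ∈ grid ρ d} (rnd ρ a) (rnd ρ b) := by
  intro n
  induction n with
  | zero =>
    intro a b ha hb hab
    norm_num at hab
    rw [hab]
    exact ChainConn.refl (rnd_mem hρ hb)
  | succ n ih =>
    intro a b ha hb hab
    by_cases hsmall : dist a b ≤ ρ / 2
    · exact ChainConn.single (rnd_mem hρ ha) (rnd_mem hρ hb)
        ((round_pair hρ hsmall).imp id id)
    · push_neg at hsmall
      set s := dist a b with hs
      have hs0 : 0 < s := by linarith
      set t : ℝ := (s - ρ / 2) / s with ht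
      have ht0 : 0 ≤ t := by
        apply div_nonneg _ (le_of_lt hs0)
        linarith
      have ht1 : t ≤ 1 := by
        rw [div_le_one hs0]
        linarith
      set b' : Fin d → ℝ := (1 - t) • a + t • b with hb'
      have hab' : dist a b' = s - ρ / 2 := by
        rw [hb', dist_eq_norm]
        have : a - ((1 - t) • a + t • b) = t • (a - b) := by module
        rw [this, norm_smul, Real.norm_eq_abs, abs_of_nonneg ht0, ← dist_eq_norm, ← hs, ht]
        field_simp
      have hb'b : dist b' b = ρ / 2 := by
        rw [hb', dist_eq_norm]
        have : ((1 - t) • a + t • b) - b = (1 - t) • (a - b) := by module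
        rw [this, norm_smul, Real.norm_eq_abs, abs_of_nonneg (by linarith), ← dist_eq_norm, ← hs, ht]
        field_simp
        ring
      have hb'inf : infDist b' C ≤ r - ρ / 2 := by
        calc infDist b' C ≤ max (infDist a C) (infDist b C) := infDist_segment hC hcp hn ht0 ht1
          _ ≤ r - ρ / 2 := max_le ha hb
      have hrec : dist a b' ≤ n * (ρ / 2) := by
        rw [hab']
        push_cast at hab ⊢
        linarith
      exact ChainConn.trans (ih a b' ha hb'inf hrec)
        (ChainConn.single (rnd_mem hρ hb'inf) (rnd_mem hρ hb)
          ((round_pair hρ (le_of_eq hb'b)).imp id id))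

lemma segment_chain {C : Set (Fin d → ℝ)} (hρ : 0 < ρ) (hC : Convex ℝ C)
    (hcp : IsCompact C) (hn : C.Nonempty) {r : ℝ} {a b : Fin d → ℝ}
    (ha : infDist a C ≤ r - ρ / 2) (hb : infDist b C ≤ r - ρ / 2) :
    ChainConn ρ {g | infDist g C ≤ r ∧ g ∈ grid ρ d} (rnd ρ a) (rnd ρ b) := by
  refine segment_chain_aux hρ hC hcp hn ⌈dist a b / (ρ / 2)⌉₊ a b ha hb ?_
  have h1 : dist a b / (ρ / 2) ≤ ⌈dist a b / (ρ / 2)⌉₊ := Nat.le_ceil _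
  have h2 : 0 < ρ / 2 := by linarith
  calc dist a b = (dist a b / (ρ / 2)) * (ρ / 2) := by field_simp
    _ ≤ ⌈dist a b / (ρ / 2)⌉₊ * (ρ / 2) := by
        apply mul_le_mul_of_nonneg_right h1 (le_of_lt h2)

end Segment


theorem stmt8 {d : ℕ} (F : (Fin d → ℝ) → Set (Fin d → ℝ))
    (hne : ∀ x, (F x).Nonempty) (hcv : ∀ x, Convex ℝ (F x))
    (hcp : ∀ x, IsCompact (F x))
    (L h ρ : ℝ) (hh : 0 < h) (hLh : L * h < 1) (hρ : 0 < ρ)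
    (hlip : ∀ x y, hausdorffDist (F x) (F y) ≤ L * dist x y)
    (M : Set (Fin d → ℝ)) (hMgrid : M ⊆ grid ρ d)
    (hMconn : ChainConnected ρ M) :
    ChainConnected ρ
      ((⋃ m ∈ M, {y : Fin d → ℝ |
          infDist y ({m} + h • F m) ≤ (1 + L * h) * ρ / 2}) ∩ grid ρ d) := by
  intro x hx y hy
  rcases Nat.eq_zero_or_pos d with hd | hd
  · subst hd
    exact ⟨0, fun _ => x, rfl, funext fun i => i.elim0,
      fun n hn => absurd hn (by omega), fun _ _ => hx⟩
  haveI : Nonempty (Fin d) := ⟨⟨0, hd⟩⟩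
  have hL0 : 0 ≤ L := by
    have h1 := hlip (fun _ => (0:ℝ)) (fun _ => (1:ℝ))
    have h2 : dist (fun _ => (0:ℝ) : Fin d → ℝ) (fun _ => (1:ℝ)) = 1 := by
      rw [dist_pi_const]
      simp [Real.dist_eq]
    rw [h2, mul_one] at h1
    exact le_trans hausdorffDist_nonneg h1
  have hβ0 : 0 ≤ L * h * ρ / 2 := by positivity
  set α : ℝ := (1 + L * h) * ρ / 2 with hα
  have hαρ : α - ρ / 2 = L * h * ρ / 2 := by rw [hα]; ring
  have hρα : ρ / 2 ≤ α := by linarith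
  have hα0 : 0 ≤ α := by linarith
  set S := (⋃ m ∈ M, {y : Fin d → ℝ |
      infDist y ({m} + h • F m) ≤ α}) ∩ grid ρ d with hSdef
  -- basic facts about the sets C m = {m} + h • F m
  have hCeq : ∀ m : Fin d → ℝ, {m} + h • F m = (fun z => m + h • z) '' F m := by
    intro m
    rw [Set.singleton_add, ← Set.image_smul, Set.image_image]
  have hCcp : ∀ m, IsCompact ({m} + h • F m) := by
    intro m
    rw [hCeq]
    exact (hcp m).image (by fun_prop)
  have hCcv : ∀ m : Fin d → ℝ, Convex ℝ ({m} + h • F m) :=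
    fun m => (convex_singleton m).add ((hcv m).smul h)
  have hCne : ∀ m, ({m} + h • F m).Nonempty := by
    intro m
    rw [hCeq]
    exact (hne m).image _
  set pick : (Fin d → ℝ) → (Fin d → ℝ) := fun m => m + h • (hne m).some with hpickdef
  have hpickmem : ∀ m, pick m ∈ {m} + h • F m := fun m =>
    Set.add_mem_add rfl (Set.smul_mem_smul_set (hne m).some_mem)
  set ξ : (Fin d → ℝ) → (Fin d → ℝ) := fun m => rnd ρ (pick m) with hξdef
  have hmemS : ∀ m ∈ M, ∀ p : Fin d → ℝ, p ∈ grid ρ d →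
      infDist p ({m} + h • F m) ≤ α → p ∈ S := by
    intro m hm p hpg hpd
    exact ⟨Set.mem_iUnion₂.mpr ⟨m, hm, hpd⟩, hpg⟩
  have hTB : ∀ m ∈ M, {g | infDist g ({m} + h • F m) ≤ α ∧ g ∈ grid ρ d} ⊆ S := by
    intro m hm g hg
    exact hmemS m hm g hg.2 hg.1
  have hpick0 : ∀ m, infDist (pick m) ({m} + h • F m) ≤ α - ρ / 2 := by
    intro m
    rw [infDist_zero_of_mem (hpickmem m), hαρ]
    exact hβ0
  have hξS : ∀ m ∈ M, ξ m ∈ S := fun m hm => hTB m hm (rnd_mem hρ (hpick0 m))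
  -- step 1 : each point of S chains to ξ m for some m ∈ M
  have hstep1 : ∀ p ∈ S, ∃ m ∈ M, ChainConn ρ S p (ξ m) := by
    intro p hp
    obtain ⟨hp1, hpg⟩ := hp
    obtain ⟨m, hm, hpd⟩ := Set.mem_iUnion₂.mp hp1
    have hpd' : infDist p ({m} + h • F m) ≤ α := hpd
    obtain ⟨c, hc, hcd⟩ := (hCcp m).exists_infDist_eq_dist (hCne m) p
    refine ⟨m, hm, ChainConn.trans (y := rnd ρ c) ?_ ?_⟩
    · -- walk p → rnd ρ c
      have hsub : {q | (∀ i, |q i - c i| ≤ α) ∧ q ∈ grid ρ d} ⊆ S := by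
        intro q hq
        apply hmemS m hm q hq.2
        calc infDist q ({m} + h • F m) ≤ dist q c := infDist_le_dist_of_mem hc
          _ ≤ α := by
              rw [dist_pi_le_iff hα0]
              intro i
              rw [Real.dist_eq]
              exact hq.1 i
      apply ChainConn.mono hsub
      apply walk hρ c p (rnd ρ c) hpg (rnd_grid ρ c)
      · intro i
        calc |p i - c i| = dist (p i) (c i) := (Real.dist_eq _ _).symm
          _ ≤ dist p c := dist_le_pi_dist p c i
          _ ≤ α := by rw [← hcd]; exact hpd'
      · intro i
        exact le_trans (rnd_coord hρ c i) hρα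
    · -- segment rnd ρ c → ξ m
      apply ChainConn.mono (hTB m hm)
      exact segment_chain hρ (hCcv m) (hCcp m) (hCne m)
        (by rw [infDist_zero_of_mem hc, hαρ]; exact hβ0) (hpick0 m)
  -- step 2 : adjacency
  have hadj : ∀ m ∈ M, ∀ m' ∈ M, dist m' m = ρ → ChainConn ρ S (ξ m) (ξ m') := by
    intro m hm m' hm' hmm
    set v : Fin d → ℝ := m' - m with hv
    have hvg : ∀ i, ∃ k : ℤ, v i = ρ * k := by
      intro i
      obtain ⟨a, ha⟩ := hMgrid hm' i
      obtain ⟨b, hb⟩ := hMgrid hm i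
      refine ⟨a - b, ?_⟩
      rw [hv, Pi.sub_apply, ha, hb]
      push_cast
      ring
    have hfm : (hne m).some ∈ F m := (hne m).some_mem
    have hfin : EMetric.hausdorffEdist (F m) (F m') ≠ ⊤ :=
      hausdorffEdist_ne_top_of_nonempty_of_bounded (hne m) (hne m')
        (hcp m).isBounded (hcp m').isBounded
    obtain ⟨f', hf', hff'⟩ := (hcp m').exists_infDist_eq_dist (hne m') (hne m).some
    have hdist_ff' : dist (hne m).some f' ≤ L * ρ := by
      rw [← hff']
      calc infDist (hne m).some (F m') ≤ hausdorffDist (F m) (F m') :=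
            infDist_le_hausdorffDist_of_mem hfm hfin
        _ ≤ L * dist m m' := hlip m m'
        _ = L * ρ := by rw [dist_comm, hmm]
    set w : Fin d → ℝ := m' + h • (hne m).some with hw
    set c' : Fin d → ℝ := m' + h • f' with hc'
    have hc'mem : c' ∈ {m'} + h • F m' :=
      Set.add_mem_add rfl (Set.smul_mem_smul_set hf')
    have hwc' : dist w c' ≤ L * h * ρ := by
      rw [hw, hc', dist_add_left, dist_smul₀, Real.norm_eq_abs, abs_of_pos hh]
      nlinarith
    set u : Fin d → ℝ := midpoint ℝ w c' with hu
    have huc' : dist u c' ≤ L * h * ρ / 2 := by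
      rw [hu, dist_midpoint_right]
      have : ‖(2:ℝ)‖⁻¹ = 1/2 := by norm_num
      rw [this]
      linarith
    have huw : dist u w ≤ L * h * ρ / 2 := by
      rw [hu, dist_midpoint_left]
      have : ‖(2:ℝ)‖⁻¹ = 1/2 := by norm_num
      rw [this]
      linarith
    set u' : Fin d → ℝ := u - v with hu'
    have hwpick : pick m = w - v := by
      rw [hpickdef, hw, hv]
      abel
    have hu'pick : dist u' (pick m) ≤ L * h * ρ / 2 := by
      rw [hu', hwpick, dist_sub_right]
      exact huw
    have hiu' : infDist u' ({m} + h • F m) ≤ α - ρ / 2 := by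
      rw [hαρ]
      exact le_trans (infDist_le_dist_of_mem (hpickmem m)) hu'pick
    have hiu : infDist u ({m'} + h • F m') ≤ α - ρ / 2 := by
      rw [hαρ]
      exact le_trans (infDist_le_dist_of_mem hc'mem) huc'
    have chainA : ChainConn ρ S (ξ m) (rnd ρ u') :=
      ChainConn.mono (hTB m hm)
        (segment_chain hρ (hCcv m) (hCcp m) (hCne m) (hpick0 m) hiu')
    have chainC : ChainConn ρ S (rnd ρ u) (ξ m') :=
      ChainConn.mono (hTB m' hm')
        (segment_chain hρ (hCcv m') (hCcp m') (hCne m') hiu (hpick0 m'))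
    have hru : rnd ρ u = rnd ρ u' + v := by
      have : u = u' + v := by rw [hu']; abel
      rw [this, rnd_add_gridvec hρ u' v hvg]
    have hstepB : ChainConn ρ S (rnd ρ u') (rnd ρ u) := by
      apply ChainConn.single (hTB m hm (rnd_mem hρ hiu')) (hTB m' hm' (rnd_mem hρ hiu))
      right
      rw [hru, dist_comm, dist_self_add_left, hv, ← dist_eq_norm, hmm]
    exact chainA.trans (hstepB.trans chainC)
  -- assemble
  obtain ⟨mx, hmx, chx⟩ := hstep1 x hx
  obtain ⟨my, hmy, chy⟩ := hstep1 y hy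
  obtain ⟨N, cc, h0, hN, hstepc, hmemc⟩ := hMconn mx hmx my hmy
  have hchain : ∀ n, n ≤ N → ChainConn ρ S (ξ mx) (ξ (cc n)) := by
    intro n
    induction n with
    | zero =>
      intro _
      rw [h0]
      exact ChainConn.refl (hξS mx hmx)
    | succ n ih =>
      intro hn
      exact (ih (by omega)).trans
        (hadj (cc n) (hmemc n (by omega)) (cc (n + 1)) (hmemc (n + 1) hn)
          (hstepc n (by omega)))
  have hfinal := hchain N le_rfl
  rw [hN] at hfinal
  exact chx.trans (hfinal.trans chy.symm)
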